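/- If G is a k-factor-critical graph of order n with 1 ≤ k < n and n + k even, then G is k-connected. -/

import Mathlib

open SimpleGraph

variable {V : Type*}

/-- `G` has a perfect matching covering exactly the vertex set `A`
(i.e. the graph obtained from `G` by deleting the vertices outside `A` has a perfect matching). -/
def HasPMOn (G : SimpleGraph V) (A : Set V) : Prop :=
  ∃ M : G.Subgraph, M.verts = A ∧ M.IsMatching

/-- `G` is `k`-factor-critical: deleting any `k` vertices leaves a graph with a perfect matching. -/
def FactorCritical [Fintype V] (G : SimpleGraph V) (k : ℕ) : Prop :=
  ∀ S : Finset V, S.card = k → HasPMOn G ((↑S : Set V)ᶜ)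

/-- `G` is minimally `k`-factor-critical. -/
def MinFactorCritical [Fintype V] (G : SimpleGraph V) (k : ℕ) : Prop :=
  FactorCritical G k ∧ ∀ u v : V, G.Adj u v → ¬ FactorCritical (G.deleteEdges {s(u,v)}) k

/-- The number of odd connected components of a graph. -/
noncomputable def oddComponents {W : Type*} (G : SimpleGraph W) : ℕ :=
  Nat.card {c : G.ConnectedComponent // Odd (Nat.card c.supp)}

/-- A finset contained in the vertex set of a matching and closed under matching edges
has even cardinality. -/
lemma matching_closed_even [Fintype V] {G : SimpleGraph V} {M : G.Subgraph}
    (hM : M.IsMatching) (A : Finset V) (hA : (↑A : Set V) ⊆ M.verts)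
    (hcl : ∀ v w, M.Adj v w → v ∈ A → w ∈ A) : Even A.card := by
  classical
  have hm : (M.induce ↑A).IsMatching := by
    intro v hv
    simp only [SimpleGraph.Subgraph.induce_verts] at hv
    obtain ⟨w, hw, hu⟩ := hM (hA hv)
    refine ⟨w, ⟨hv, hcl v w hw hv, hw⟩, ?_⟩
    rintro y ⟨-, -, hy⟩
    exact hu y hy
  have h2 := hm.even_card
  rwa [SimpleGraph.Subgraph.induce_verts, Finset.toFinset_coe] at h2

theorem factorCritical_kConnected [Fintype V] (G : SimpleGraph V) (n k : ℕ)
    (hn : Fintype.card V = n) (hk1 : 1 ≤ k) (hk2 : k < n) (hpar : Even (n + k))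
    (hG : FactorCritical G k) :
    k < Fintype.card V ∧
      ∀ S : Finset V, S.card < k → (G.induce ((↑S : Set V)ᶜ)).Connected := by
  classical
  subst hn
  refine ⟨hk2, ?_⟩
  intro S hS
  by_contra hnc
  set n := Fintype.card V with hn
  set s := S.card with hsdef
  -- the complement of S is nonempty
  have hscompl : Sᶜ.card = n - s := by simp [Finset.card_compl, hn]; rfl
  have hnk2 : 2 ≤ n - k := by
    obtain ⟨c, hc⟩ := hpar
    omega
  have hne : ((↑S : Set V)ᶜ).Nonempty := by
    have : Sᶜ.Nonempty := Finset.card_pos.mp (by omega)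
    obtain ⟨v, hv⟩ := this
    exact ⟨v, by simpa using Finset.mem_compl.mp hv⟩
  have hnonempty : Nonempty ((↑S : Set V)ᶜ : Set V) := hne.to_subtype
  rw [connected_iff] at hnc
  push_neg at hnc
  have hpre : ¬ (G.induce ((↑S : Set V)ᶜ)).Preconnected := fun h => (hnc h).false hnonempty.some
  rw [Preconnected] at hpre
  push_neg at hpre
  obtain ⟨x, y, hxy⟩ := hpre
  -- the component of x, as a finset of V
  set H := G.induce ((↑S : Set V)ᶜ) with hH
  set C : Finset V :=
    Finset.univ.filter (fun v => ∃ h : v ∈ ((↑S : Set V)ᶜ), H.Reachable x ⟨v, h⟩) with hC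
  have hCmem : ∀ v, v ∈ C ↔ ∃ h : v ∈ ((↑S : Set V)ᶜ), H.Reachable x ⟨v, h⟩ := by
    intro v; simp [hC]
  have hCS : C ⊆ Sᶜ := by
    intro v hv
    obtain ⟨h, -⟩ := (hCmem v).mp hv
    exact Finset.mem_compl.mpr (by simpa using h)
  have hxC : (x : V) ∈ C := (hCmem _).mpr ⟨x.2, by rw [Subtype.coe_eta]⟩
  have hyC : (y : V) ∉ C := by
    intro hy
    obtain ⟨h, hr⟩ := (hCmem _).mp hy
    rw [Subtype.coe_eta] at hr
    exact hxy hr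
  -- closure of C under edges of G avoiding S
  have hclose : ∀ v w, v ∈ C → w ∉ S → G.Adj v w → w ∈ C := by
    intro v w hv hw hadj
    obtain ⟨h, hr⟩ := (hCmem v).mp hv
    have hw' : w ∈ ((↑S : Set V)ᶜ) := by simpa using hw
    refine (hCmem w).mpr ⟨hw', hr.trans (SimpleGraph.Adj.reachable ?_)⟩
    exact hadj
  set R : Finset V := Sᶜ \ C with hR
  have hyR : (y : V) ∈ R := by
    refine Finset.mem_sdiff.mpr ⟨by exact_mod_cast y.2, hyC⟩
  set m := C.card with hm
  set r := R.card with hr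
  have hm1 : 1 ≤ m := Finset.card_pos.mpr ⟨x, hxC⟩
  have hr1 : 1 ≤ r := Finset.card_pos.mpr ⟨y, hyR⟩
  have hmr : m + r = n - s := by
    rw [hm, hr, hR, Finset.card_sdiff_of_subset hCS, hscompl]
    have := Finset.card_le_card hCS
    rw [hscompl] at this
    omega
  set t := k - s with ht
  have ht1 : 1 ≤ t := by omega
  have hmrt : m + r ≥ t + 2 := by omega
  obtain ⟨a, ham, hat, har, hpara⟩ :
      ∃ a, a ≤ m ∧ a ≤ t ∧ t - a ≤ r ∧ (m + a) % 2 = 1 := by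
    by_cases hcase : (m + (t - r)) % 2 = 1
    · exact ⟨t - r, by omega, by omega, by omega, hcase⟩
    · exact ⟨t - r + 1, by omega, by omega, by omega, by omega⟩
  obtain ⟨T₁, hT₁C, hT₁card⟩ := Finset.exists_subset_card_eq (s := C) (n := a) (by omega)
  obtain ⟨T₂, hT₂R, hT₂card⟩ := Finset.exists_subset_card_eq (s := R) (n := t - a) har
  set S' : Finset V := S ∪ T₁ ∪ T₂ with hS'
  have hCR : Disjoint C R := Finset.disjoint_sdiff
  have hST₁ : Disjoint S T₁ :=
    Finset.disjoint_left.mpr fun v hv hv' =>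
      Finset.mem_compl.mp (hCS (hT₁C hv')) hv
  have hST₂ : Disjoint S T₂ :=
    Finset.disjoint_left.mpr fun v hv hv' =>
      Finset.mem_compl.mp (Finset.mem_sdiff.mp (hT₂R hv')).1 hv
  have hT₁₂ : Disjoint T₁ T₂ :=
    (hCR.mono hT₁C hT₂R)
  have hS'card : S'.card = k := by
    rw [hS', Finset.card_union_of_disjoint, Finset.card_union_of_disjoint hST₁,
      hT₁card, hT₂card]
    · omega
    · exact Finset.disjoint_union_left.mpr ⟨hST₂, hT₁₂⟩
  obtain ⟨M, hMv, hMm⟩ := hG S' hS'card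
  set A : Finset V := C \ T₁ with hA
  have hAM : (↑A : Set V) ⊆ M.verts := by
    intro v hv
    have hv' : v ∈ A := by simpa using hv
    obtain ⟨hvC, hvT₁⟩ := Finset.mem_sdiff.mp hv'
    rw [hMv]
    simp only [Set.mem_compl_iff, Finset.coe_union, Set.mem_union, Finset.mem_coe]
    rintro h
    rcases Finset.mem_union.mp h with h | h
    · rcases Finset.mem_union.mp h with h | h
      · exact Finset.mem_compl.mp (hCS hvC) h
      · exact hvT₁ h
    · exact Finset.disjoint_left.mp hCR hvC (hT₂R h)
  have hclA : ∀ v w, M.Adj v w → v ∈ A → w ∈ A := by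
    intro v w hvw hvA
    obtain ⟨hvC, -⟩ := Finset.mem_sdiff.mp hvA
    have hwM : w ∈ M.verts := M.edge_vert hvw.symm
    rw [hMv] at hwM
    have hwS' : w ∉ S' := by simpa using hwM
    have hwS : w ∉ S := fun h => hwS' (Finset.mem_union.mpr (Or.inl (Finset.mem_union.mpr (Or.inl h))))
    have hwT₁ : w ∉ T₁ := fun h => hwS' (Finset.mem_union.mpr (Or.inl (Finset.mem_union.mpr (Or.inr h))))
    exact Finset.mem_sdiff.mpr ⟨hclose v w hvC hwS (M.adj_sub hvw), hwT₁⟩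
  have heven : Even A.card := matching_closed_even hMm A hAM hclA
  have hAcard : A.card = m - a := by
    rw [hA, Finset.card_sdiff_of_subset hT₁C, hT₁card]
  obtain ⟨c, hc⟩ := heven
  omega
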